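/- arXiv:1108.2943 — 2 statements merged into one kernel-verified Lean document; each statement's English description precedes it below -/
import Mathlib

section
/- Let U ⊆ ℂ be an open set, m ≥ 1, and let ε : Fin m → ℝ satisfy ε α ∈ {-1, 1} for every α. Let Ω : U → (Fin m → ℂ) be continuously ℝ-differentiable and let A : U → Matrix (Fin m) (Fin m) ℂ be a map with A p α β = - A p β α for all p ∈ U and all indices α, β. Suppose that for every α and every p ∈ U the Wirtinger derivative satisfies ∂Ω_α/∂z̄ (p) = - ∑_β ε β · Ω_β(p) · conj(A p β α). Then the function h : U → ℂ defined by h(p) = ∑_α ε α · (Ω_α(p))² satisfies ∂h/∂z̄ = 0 at every point of U; in particular, h is holomorphic on U. -/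
open Complex

/-- The Wirtinger derivative `∂f/∂z̄ = (1/2)(∂f/∂x + i ∂f/∂y)` of a map `f : ℂ → ℂ`
that is differentiable in the real sense. -/
noncomputable def wirtingerBar (f : ℂ → ℂ) (p : ℂ) : ℂ :=
  (1 / 2) * (fderiv ℝ f p 1 + Complex.I * fderiv ℝ f p Complex.I)

/-- If `Ω : U → ℂ^m` is continuously ℝ-differentiable, `A` is antisymmetric, `ε α ∈ {-1,1}`,
and `∂Ω_α/∂z̄ = - ∑_β ε β Ω_β conj(A_{βα})`, then `h = ∑_α ε α Ω_α²` satisfies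
`∂h/∂z̄ = 0` on `U`; in particular `h` is holomorphic on `U`. -/
theorem holomorphic_sum_sq_of_antisymm_system
    (U : Set ℂ) (hU : IsOpen U) (m : ℕ) (hm : 1 ≤ m)
    (ε : Fin m → ℝ) (hε : ∀ α, ε α ∈ ({-1, 1} : Set ℝ))
    (Ω : ℂ → Fin m → ℂ) (hΩ : ContDiffOn ℝ 1 Ω U)
    (A : ℂ → Matrix (Fin m) (Fin m) ℂ)
    (hA : ∀ p ∈ U, ∀ α β, A p α β = - A p β α)
    (hsys : ∀ α, ∀ p ∈ U,
      wirtingerBar (fun z => Ω z α) p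
        = - ∑ β, (ε β : ℂ) * Ω p β * (starRingEnd ℂ) (A p β α))
    (h : ℂ → ℂ) (hh : ∀ p, h p = ∑ α, (ε α : ℂ) * (Ω p α) ^ 2) :
    (∀ p ∈ U, wirtingerBar h p = 0) ∧ DifferentiableOn ℂ h U := by
  -- differentiability of components
  have hΩd : ∀ p ∈ U, ∀ α, DifferentiableAt ℝ (fun z => Ω z α) p := by
    intro p hp α
    have := (hΩ.differentiableOn one_ne_zero p hp).differentiableAt (hU.mem_nhds hp)
    exact differentiableAt_pi.mp this α
  -- derivative of h
  have key : ∀ p ∈ U, HasFDerivAt h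
      (∑ α, (ε α : ℂ) • (Ω p α • fderiv ℝ (fun z => Ω z α) p
        + Ω p α • fderiv ℝ (fun z => Ω z α) p)) p := by
    intro p hp
    have : HasFDerivAt (fun z => ∑ α, (ε α : ℂ) * (Ω z α) ^ 2)
        (∑ α, (ε α : ℂ) • (Ω p α • fderiv ℝ (fun z => Ω z α) p
          + Ω p α • fderiv ℝ (fun z => Ω z α) p)) p := by
      apply HasFDerivAt.fun_sum
      intro α _
      have hD := (hΩd p hp α).hasFDerivAt
      have hsq : HasFDerivAt (fun z => (Ω z α) ^ 2)
          (Ω p α • fderiv ℝ (fun z => Ω z α) p + Ω p α • fderiv ℝ (fun z => Ω z α) p) p := by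
        have := hD.fun_mul hD
        simpa [pow_two] using this
      exact hsq.const_mul _
    exact this.congr_of_eventuallyEq (by filter_upwards with z using (hh z))
  -- wirtingerBar h value
  have hwb : ∀ p ∈ U, wirtingerBar h p = 0 := by
    intro p hp
    have hf := (key p hp).fderiv
    have hval : ∀ v : ℂ, fderiv ℝ h p v =
        ∑ α, (ε α : ℂ) * (2 * Ω p α * fderiv ℝ (fun z => Ω z α) p v) := by
      intro v
      rw [hf]
      simp only [ContinuousLinearMap.sum_apply, ContinuousLinearMap.smul_apply,
        ContinuousLinearMap.add_apply, smul_eq_mul]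
      exact Finset.sum_congr rfl fun α _ => by ring
    have : wirtingerBar h p
        = ∑ α, (ε α : ℂ) * (2 * Ω p α) * wirtingerBar (fun z => Ω z α) p := by
      unfold wirtingerBar
      rw [hval 1, hval Complex.I, Finset.mul_sum, ← Finset.sum_add_distrib,
        Finset.mul_sum]
      apply Finset.sum_congr rfl
      intro α _
      ring
    rw [this]
    have : ∑ α, (ε α : ℂ) * (2 * Ω p α) * wirtingerBar (fun z => Ω z α) p
        = -2 * ∑ α, ∑ β, (ε α : ℂ) * (ε β : ℂ) * Ω p α * Ω p β * (starRingEnd ℂ) (A p β α) := by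
      rw [Finset.mul_sum]
      apply Finset.sum_congr rfl
      intro α _
      rw [hsys α p hp, mul_neg, Finset.mul_sum, ← Finset.sum_neg_distrib]
      conv_rhs => rw [Finset.mul_sum]
      exact Finset.sum_congr rfl fun β _ => by ring
    rw [this]
    have hS : ∑ α, ∑ β, (ε α : ℂ) * (ε β : ℂ) * Ω p α * Ω p β * (starRingEnd ℂ) (A p β α)
        = 0 := by
      have hanti : ∀ α β, (ε α : ℂ) * (ε β : ℂ) * Ω p α * Ω p β * (starRingEnd ℂ) (A p β α)
          = -((ε β : ℂ) * (ε α : ℂ) * Ω p β * Ω p α * (starRingEnd ℂ) (A p α β)) := by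
        intro α β
        rw [hA p hp α β, map_neg]
        ring
      have h2 : (∑ α, ∑ β, (ε α : ℂ) * (ε β : ℂ) * Ω p α * Ω p β * (starRingEnd ℂ) (A p β α))
          = -(∑ α, ∑ β, (ε α : ℂ) * (ε β : ℂ) * Ω p α * Ω p β * (starRingEnd ℂ) (A p β α)) := by
        conv_lhs => rw [Finset.sum_comm]
        rw [← Finset.sum_neg_distrib]
        apply Finset.sum_congr rfl
        intro α _
        rw [← Finset.sum_neg_distrib]
        apply Finset.sum_congr rfl
        intro β _
        linear_combination hanti β α
      linear_combination (1/2 : ℂ) * h2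
    rw [hS, mul_zero]
  refine ⟨hwb, ?_⟩
  intro p hp
  have hD := key p hp
  set L := (∑ α, (ε α : ℂ) • (Ω p α • fderiv ℝ (fun z => Ω z α) p
        + Ω p α • fderiv ℝ (fun z => Ω z α) p)) with hL
  have hfd : fderiv ℝ h p = L := hD.fderiv
  have hCR : L Complex.I = Complex.I * L 1 := by
    have h0 := hwb p hp
    unfold wirtingerBar at h0
    rw [hfd] at h0
    have h1 : L 1 + Complex.I * L Complex.I = 0 := by linear_combination 2 * h0
    linear_combination (-Complex.I) * h1 + (L Complex.I) * Complex.I_sq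
  -- build complex-linear derivative
  have hg : HasFDerivAt h ((L 1) • (ContinuousLinearMap.id ℂ ℂ)) p := by
    apply hasFDerivAt_of_restrictScalars ℝ hD
    ext z
    have hz : z = z.re • (1 : ℂ) + z.im • Complex.I := by
      simp [Complex.real_smul]
    rw [ContinuousLinearMap.coe_restrictScalars']
    show L 1 * z = L z
    conv_rhs => rw [hz]
    rw [map_add, map_smul, map_smul, hCR]
    simp only [Complex.real_smul]
    conv_lhs => rw [← Complex.re_add_im z]
    ring
  exact (hg.differentiableAt).differentiableWithinAt
end

section
/- Let m ≥ 1, let A, B : Matrix (Fin m) (Fin m) ℝ be constant matrices, let U ⊆ ℝ × ℝ be an open connected set, and let f : ℝ × ℝ → (Fin m → ℝ) be differentiable on U such that for every p ∈ U the partial derivatives satisfy ∂f/∂u (p) = A.mulVec (f p) and ∂f/∂v (p) = B.mulVec (f p), where u and v denote the two coordinates of ℝ × ℝ. If f(p₀) = 0 for some point p₀ ∈ U, then f(p) = 0 for every p ∈ U. -/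
open Set Metric

/-- Along a segment inside `U`, the solution vanishing at one endpoint vanishes at the other. -/
private lemma zero_on_ball
    (m : ℕ) (A B : Matrix (Fin m) (Fin m) ℝ)
    (U : Set (ℝ × ℝ)) (hU : IsOpen U)
    (f : ℝ × ℝ → Fin m → ℝ) (hf : DifferentiableOn ℝ f U)
    (hfu : ∀ p ∈ U, fderiv ℝ f p (1, 0) = A.mulVec (f p))
    (hfv : ∀ p ∈ U, fderiv ℝ f p (0, 1) = B.mulVec (f p))
    (p : ℝ × ℝ) (hp : f p = 0) (r : ℝ) (hr : 0 < r) (hball : ball p r ⊆ U) :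
    ∀ q ∈ ball p r, f q = 0 := by
  intro q hq
  rcases eq_or_ne q p with rfl | hqp
  · exact hp
  set d : ℝ × ℝ := q - p with hd
  have hdne : d ≠ 0 := sub_ne_zero.mpr hqp
  have hdnorm : 0 < ‖d‖ := norm_pos_iff.mpr hdne
  set T : ℝ := r / ‖d‖ with hT
  have hT1 : 1 < T := by
    rw [hT, lt_div_iff₀ hdnorm, one_mul]
    simpa [hd, dist_eq_norm] using hq
  -- the matrix governing the ODE along the segment
  set C : Matrix (Fin m) (Fin m) ℝ := d.1 • A + d.2 • B with hC
  -- the linear vector field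
  let L : (Fin m → ℝ) →L[ℝ] (Fin m → ℝ) :=
    LinearMap.toContinuousLinearMap (Matrix.mulVecLin C)
  -- the curve
  set c : ℝ → ℝ × ℝ := fun t => p + t • d with hc
  have hmem : ∀ t ∈ Ioo (-T) T, c t ∈ ball p r := by
    intro t ht
    have habs : |t| < T := abs_lt.mpr ⟨ht.1, ht.2⟩
    have : |t| * ‖d‖ < T * ‖d‖ := by
      exact mul_lt_mul_of_pos_right habs hdnorm
    rw [hT, div_mul_cancel₀ _ (ne_of_gt hdnorm)] at this
    simpa [hc, dist_eq_norm, norm_smul, abs_mul] using this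
  have hsol : ∀ t ∈ Ioo (-T) T,
      HasDerivAt (fun s => f (c s)) (L (f (c t))) t := by
    intro t ht
    have hcmem : c t ∈ U := hball (hmem t ht)
    have hcderiv : HasDerivAt c d t := by
      simpa [hc] using ((hasDerivAt_id t).smul_const d).const_add p
    have hfd : DifferentiableAt ℝ f (c t) :=
      (hf.differentiableAt (hU.mem_nhds hcmem))
    have hcomp : HasDerivAt (fun s => f (c s)) (fderiv ℝ f (c t) d) t :=
      hfd.hasFDerivAt.comp_hasDerivAt t hcderiv
    have key : fderiv ℝ f (c t) d = L (f (c t)) := by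
      have hsplit : d = d.1 • ((1 : ℝ), (0 : ℝ)) + d.2 • ((0 : ℝ), (1 : ℝ)) := by
        ext <;> simp
      rw [hsplit, map_add, map_smul, map_smul]
      rw [hfu _ hcmem, hfv _ hcmem]
      show _ = Matrix.mulVec C (f (c t))
      rw [hC, Matrix.add_mulVec, Matrix.smul_mulVec, Matrix.smul_mulVec]
    rwa [key] at hcomp
  have hzero : (fun s => f (c s)) 1 = (fun _ => (0 : Fin m → ℝ)) 1 := by
    have h0mem : (0 : ℝ) ∈ Ioo (-T) T := ⟨by linarith, by linarith⟩
    have := ODE_solution_unique_of_mem_Ioo (v := fun _ y => L y)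
      (s := fun _ => (univ : Set (Fin m → ℝ))) (K := ‖L‖₊)
      (f := fun s => f (c s)) (g := fun _ => (0 : Fin m → ℝ))
      (t₀ := (0 : ℝ)) (a := -T) (b := T)
      (fun _ _ => L.lipschitz.lipschitzOnWith) h0mem
      (fun t ht => ⟨hsol t ht, trivial⟩)
      (fun t _ => ⟨by simpa using hasDerivAt_const t (0 : Fin m → ℝ), trivial⟩)
      (by simp [hc, hp])
    exact this ⟨by linarith, hT1⟩
  simpa [hc, hd] using hzero

/-- Uniqueness for an overdetermined first-order linear system with constant coefficients:
if `∂f/∂u = A f` and `∂f/∂v = B f` on an open connected set `U` and `f` vanishes at one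
point of `U`, then `f` vanishes identically on `U`. -/
theorem vanishing_of_constant_coefficient_linear_system
    (m : ℕ) (hm : 1 ≤ m) (A B : Matrix (Fin m) (Fin m) ℝ)
    (U : Set (ℝ × ℝ)) (hU : IsOpen U) (hconn : IsConnected U)
    (f : ℝ × ℝ → Fin m → ℝ) (hf : DifferentiableOn ℝ f U)
    (hfu : ∀ p ∈ U, fderiv ℝ f p (1, 0) = A.mulVec (f p))
    (hfv : ∀ p ∈ U, fderiv ℝ f p (0, 1) = B.mulVec (f p))
    (p₀ : ℝ × ℝ) (hp₀ : p₀ ∈ U) (hf0 : f p₀ = 0) :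
    ∀ p ∈ U, f p = 0 := by
  -- V is the interior-style zero set, W the nonzero set; both open, cover U.
  set V : Set (ℝ × ℝ) := {p | p ∈ U ∧ f p = 0} with hV
  have hVopen : IsOpen V := by
    rw [isOpen_iff_forall_mem_open]
    rintro p ⟨hpU, hp0⟩
    obtain ⟨r, hr, hball⟩ := Metric.isOpen_iff.mp hU p hpU
    refine ⟨ball p r, ?_, isOpen_ball, mem_ball_self hr⟩
    intro q hq
    exact ⟨hball hq, zero_on_ball m A B U hU f hf hfu hfv p hp0 r hr hball q hq⟩
  set W : Set (ℝ × ℝ) := {p | p ∈ U ∧ f p ≠ 0} with hW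
  have hWopen : IsOpen W := by
    rw [isOpen_iff_forall_mem_open]
    rintro p ⟨hpU, hp0⟩
    have hcont : ContinuousAt f p := (hf.differentiableAt (hU.mem_nhds hpU)).continuousAt
    have : ∀ᶠ q in nhds p, f q ≠ 0 := hcont.eventually_ne hp0
    obtain ⟨s, hsub, hsopen, hps⟩ := _root_.eventually_nhds_iff.mp (this.and (hU.eventually_mem hpU))
    exact ⟨s, fun q hq => ⟨(hsub q hq).2, (hsub q hq).1⟩, hsopen, hps⟩
  intro p hp
  by_contra hne
  have hcover : U ⊆ V ∪ W := by
    intro q hq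
    by_cases h : f q = 0
    · exact Or.inl ⟨hq, h⟩
    · exact Or.inr ⟨hq, h⟩
  have hVne : (U ∩ V).Nonempty := ⟨p₀, hp₀, hp₀, hf0⟩
  have hWne : (U ∩ W).Nonempty := ⟨p, hp, hp, hne⟩
  obtain ⟨q, -, ⟨-, hq0⟩, ⟨-, hqne⟩⟩ :=
    hconn.isPreconnected V W hVopen hWopen hcover hVne hWne
  exact hqne hq0
end
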